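/- The forward- and backward-dependent factorized (low-rank) CDM model classes coincide: for every parameter θ_F = (δ, β, T, C) there exists a parameter θ_B such that for all covariates x : 𝒰 → ℝ^d, all choice sets S ⊆ 𝒰 with |S| ≥ 2, and all j ∈ S, the forward-dependent choice probability under θ_F equals the backward-dependent choice probability under θ_B; and conversely, for every θ_B there exists θ_F with the same property. -/
import Mathlib


open Finset

/-- Forward-dependent representative utility of the factorized (low-rank) CDM:
`V^F_θ(j|S) = δ_j + β·x_j + t_jᵀ (Σ_{l ∈ S, l ≠ j} c_l)`. -/
noncomputable def VFlow {𝒰 : Type*} [DecidableEq 𝒰] {d r : ℕ}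
    (δ : 𝒰 → ℝ) (β : Fin d → ℝ) (t c : 𝒰 → Fin r → ℝ)
    (x : 𝒰 → Fin d → ℝ) (S : Finset 𝒰) (j : 𝒰) : ℝ :=
  δ j + (∑ i, β i * x j i) + ∑ k, t j k * ∑ l ∈ S.erase j, c l k

/-- Backward-dependent representative utility of the factorized (low-rank) CDM:
`V^B_θ(j|S) = δ_j + β·x_j + t_jᵀ (Σ_{l ∈ 𝒰 \ S} c_l)`. -/
noncomputable def VBlow {𝒰 : Type*} [Fintype 𝒰] [DecidableEq 𝒰] {d r : ℕ}
    (δ : 𝒰 → ℝ) (β : Fin d → ℝ) (t c : 𝒰 → Fin r → ℝ)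
    (x : 𝒰 → Fin d → ℝ) (S : Finset 𝒰) (j : 𝒰) : ℝ :=
  δ j + (∑ i, β i * x j i) + ∑ k, t j k * ∑ l ∈ Sᶜ, c l k


lemma VF_eq_VB {𝒰 : Type*} [Fintype 𝒰] [DecidableEq 𝒰] {d r : ℕ}
    (δ : 𝒰 → ℝ) (β : Fin d → ℝ) (t c : 𝒰 → Fin r → ℝ)
    (x : 𝒰 → Fin d → ℝ) (S : Finset 𝒰) (j : 𝒰) (hj : j ∈ S) :
    VFlow (fun i => δ i + ∑ k, t i k * ((∑ l, c l k) - c i k)) β t (fun l k => -c l k) x S j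
      = VBlow δ β t c x S j := by
  simp only [VFlow, VBlow]
  have h1 : ∀ k, ∑ l ∈ S.erase j, -c l k = -((∑ l ∈ S, c l k) - c j k) := by
    intro k
    rw [Finset.sum_neg_distrib, Finset.sum_erase_eq_sub hj]
  have h2 : ∀ k, ∑ l ∈ Sᶜ, c l k = (∑ l, c l k) - ∑ l ∈ S, c l k := by
    intro k
    rw [eq_sub_iff_add_eq, Finset.sum_compl_add_sum]
  simp only [h1, h2]
  have h3 : ∑ k, t j k * ((∑ l, c l k) - c j k) + ∑ k, t j k * -((∑ l ∈ S, c l k) - c j k)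
      = ∑ k, t j k * ((∑ l, c l k) - ∑ l ∈ S, c l k) := by
    rw [← Finset.sum_add_distrib]
    exact Finset.sum_congr rfl fun k _ => by ring
  linarith [h3]

lemma VB_eq_VF {𝒰 : Type*} [Fintype 𝒰] [DecidableEq 𝒰] {d r : ℕ}
    (δ : 𝒰 → ℝ) (β : Fin d → ℝ) (t c : 𝒰 → Fin r → ℝ)
    (x : 𝒰 → Fin d → ℝ) (S : Finset 𝒰) (j : 𝒰) (hj : j ∈ S) :
    VBlow (fun i => δ i + ∑ k, t i k * ((∑ l, c l k) - c i k)) β t (fun l k => -c l k) x S j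
      = VFlow δ β t c x S j := by
  simp only [VFlow, VBlow]
  have h1 : ∀ k, ∑ l ∈ S.erase j, c l k = (∑ l ∈ S, c l k) - c j k := fun k =>
    Finset.sum_erase_eq_sub hj
  have h2 : ∀ k, ∑ l ∈ Sᶜ, -c l k = -((∑ l, c l k) - ∑ l ∈ S, c l k) := by
    intro k
    rw [Finset.sum_neg_distrib, neg_inj, eq_sub_iff_add_eq, Finset.sum_compl_add_sum]
  simp only [h1, h2]
  have h3 : ∑ k, t j k * ((∑ l, c l k) - c j k) + ∑ k, t j k * -((∑ l, c l k) - ∑ l ∈ S, c l k)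
      = ∑ k, t j k * ((∑ l ∈ S, c l k) - c j k) := by
    rw [← Finset.sum_add_distrib]
    exact Finset.sum_congr rfl fun k _ => by ring
  linarith [h3]

/-- The forward- and backward-dependent factorized (low-rank) CDM model classes coincide:
every forward-dependent parameter has a backward-dependent counterpart inducing identical
choice probabilities on all choice sets of size ≥ 2, and conversely. -/
theorem lowrank_cdm_model_classes_coincide
    (𝒰 : Type*) [Fintype 𝒰] [DecidableEq 𝒰] (d r : ℕ) :
    (∀ (δF : 𝒰 → ℝ) (βF : Fin d → ℝ) (tF cF : 𝒰 → Fin r → ℝ),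
      ∃ (δB : 𝒰 → ℝ) (βB : Fin d → ℝ) (tB cB : 𝒰 → Fin r → ℝ),
        ∀ (x : 𝒰 → Fin d → ℝ) (S : Finset 𝒰), 2 ≤ S.card → ∀ j ∈ S,
          Real.exp (VFlow δF βF tF cF x S j) / (∑ k ∈ S, Real.exp (VFlow δF βF tF cF x S k))
            = Real.exp (VBlow δB βB tB cB x S j) /
                (∑ k ∈ S, Real.exp (VBlow δB βB tB cB x S k))) ∧
    (∀ (δB : 𝒰 → ℝ) (βB : Fin d → ℝ) (tB cB : 𝒰 → Fin r → ℝ),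
      ∃ (δF : 𝒰 → ℝ) (βF : Fin d → ℝ) (tF cF : 𝒰 → Fin r → ℝ),
        ∀ (x : 𝒰 → Fin d → ℝ) (S : Finset 𝒰), 2 ≤ S.card → ∀ j ∈ S,
          Real.exp (VFlow δF βF tF cF x S j) / (∑ k ∈ S, Real.exp (VFlow δF βF tF cF x S k))
            = Real.exp (VBlow δB βB tB cB x S j) /
                (∑ k ∈ S, Real.exp (VBlow δB βB tB cB x S k))) := by
  constructor
  · intro δF βF tF cF
    refine ⟨fun i => δF i + ∑ k, tF i k * ((∑ l, cF l k) - cF i k), βF, tF,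
      fun l k => -cF l k, fun x S _ j hj => ?_⟩
    rw [← VB_eq_VF δF βF tF cF x S j hj]
    congr 1
    exact Finset.sum_congr rfl fun k hk => by rw [VB_eq_VF δF βF tF cF x S k hk]
  · intro δB βB tB cB
    refine ⟨fun i => δB i + ∑ k, tB i k * ((∑ l, cB l k) - cB i k), βB, tB,
      fun l k => -cB l k, fun x S _ j hj => ?_⟩
    rw [VF_eq_VB δB βB tB cB x S j hj]
    congr 1
    exact Finset.sum_congr rfl fun k hk => by rw [VF_eq_VB δB βB tB cB x S k hk]
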